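/- For every positive integer $k$ and every $f \in J(k, \mathbb{Z}[x])$, the coefficient of $x^1$ in $f$ is divisible by $k$. Consequently $k$ divides $m(k)$. -/
import Mathlib


open Polynomial

/-- `J(k,R)`: the additive subgroup of `R` generated by `k`-th powers of elements of `R`. -/
def Jgrp (k : ℕ) (R : Type*) [CommRing R] : AddSubgroup R :=
  AddSubgroup.closure {r : R | ∃ g : R, r = g ^ k}

/-- `G(k,R) = {m : ℤ | ∀ r : R, m • r ∈ J(k,R)}`, an additive subgroup of `ℤ`
(realized as an ideal of `ℤ`, which has the same underlying set). -/
def Ggrp (k : ℕ) (R : Type*) [CommRing R] : Ideal ℤ where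
  carrier := {m : ℤ | ∀ r : R, m • r ∈ Jgrp k R}
  add_mem' := fun {a b} ha hb r => by
    simpa [add_smul] using (Jgrp k R).add_mem (ha r) (hb r)
  zero_mem' := fun r => by simpa using (Jgrp k R).zero_mem
  smul_mem' := fun c m hm r => by
    have h := hm (c • r)
    rw [smul_smul, mul_comm] at h
    simpa [smul_smul] using h

/-- `m(k,R)`: the nonnegative generator of `G(k,R)`. -/
noncomputable def mval (k : ℕ) (R : Type*) [CommRing R] : ℕ :=
  (Submodule.IsPrincipal.generator (Ggrp k R)).natAbs

theorem aux_coeff (k : ℕ) (g : Polynomial ℤ) : (k:ℤ) ∣ (g^k).coeff 1 := by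
  have h : (g^k).coeff 1 = (derivative (g^k)).coeff 0 := by
    simp [coeff_derivative]
  rw [h, derivative_pow]
  exact ⟨(g ^ (k - 1) * derivative g).coeff 0, by simp [coeff_C_mul, mul_assoc]⟩

theorem k_dvd_coeff_one_and_mval (k : ℕ) (hk : 0 < k) :
    (∀ f ∈ Jgrp k (Polynomial ℤ), (k : ℤ) ∣ f.coeff 1) ∧ k ∣ mval k (Polynomial ℤ) := by
  have hmain : ∀ f ∈ Jgrp k (Polynomial ℤ), (k : ℤ) ∣ f.coeff 1 := by
    intro f hf
    refine AddSubgroup.closure_induction (fun r hr => ?_) (by simp) ?_ ?_ hf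
    · obtain ⟨g, rfl⟩ := hr; exact aux_coeff k g
    · intro a b _ _ ha hb; simpa [coeff_add] using dvd_add ha hb
    · intro a _ ha; simpa using ha.neg_right
  refine ⟨hmain, ?_⟩
  have hgen := Submodule.IsPrincipal.generator_mem (Ggrp k (Polynomial ℤ))
  have h := hmain _ (hgen X)
  simp [coeff_X] at h
  have : (k:ℤ) ∣ Submodule.IsPrincipal.generator (Ggrp k (Polynomial ℤ)) := h
  exact Int.natCast_dvd_natCast.mp (by simpa [mval, Int.natAbs] using Int.dvd_natAbs.mpr this)
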